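/- Let q > 1 be a real number and for each prime ℓ let e_ℓ be a positive integer with e_ℓ ≤ q^ℓ · C for a constant C, and suppose each prime number divides at most two of the e_ℓ. Define Ψ(n) = ∑_{p | n} 1/p. Then liminf over primes ℓ → ∞ of Ψ(e_ℓ) = 0. -/

import Mathlib

open Finset

lemma aux_pow_card_primeFactors (m : ℕ) (hm : 1 ≤ m) :
    2 ^ m.primeFactors.card ≤ m := by
  calc 2 ^ m.primeFactors.card ≤ ∏ p ∈ m.primeFactors, p := by
        apply Finset.pow_card_le_prod
        intro p hp; exact (Nat.prime_of_mem_primeFactors hp).two_le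
    _ ≤ m := Nat.le_of_dvd hm (Nat.prod_primeFactors_dvd m)

lemma aux_harmonic (m : ℕ) : ∑ i ∈ Finset.Ico 1 (m + 1), (1 : ℝ) / i ≤ 2 * Real.sqrt m := by
  induction m with
  | zero => simp
  | succ m ih =>
    rw [Finset.sum_Ico_succ_top (by omega)]
    have h1 : (1 : ℝ) / (m + 1) ≤ 2 * Real.sqrt (m + 1) - 2 * Real.sqrt m := by
      have ha : Real.sqrt m ^ 2 = (m : ℝ) := Real.sq_sqrt (by positivity)
      have hb : Real.sqrt ((m : ℝ) + 1) ^ 2 = (m : ℝ) + 1 := Real.sq_sqrt (by positivity)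
      have hb1 : (1 : ℝ) ≤ Real.sqrt ((m : ℝ) + 1) :=
        (Real.le_sqrt' one_pos).mpr (by nlinarith [Nat.cast_nonneg (α := ℝ) m])
      have hab : Real.sqrt m ≤ Real.sqrt ((m:ℝ) + 1) := Real.sqrt_le_sqrt (by linarith)
      rw [div_le_iff₀ (by positivity)]
      nlinarith [Real.sqrt_nonneg (m : ℝ), mul_nonneg (sub_nonneg.2 hab)
        (sub_nonneg.2 hab)]
    have : ((m : ℝ) + 1) = ((m + 1 : ℕ) : ℝ) := by push_cast; ring
    push_cast
    linarith

lemma aux_block (i : ℕ) :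
    i * ((Finset.Ico (2 ^ i + 1) (2 ^ (i + 1) + 1)).filter Nat.Prime).card ≤ 2 ^ (i + 2) := by
  set Bi := (Finset.Ico (2 ^ i + 1) (2 ^ (i + 1) + 1)).filter Nat.Prime with hBi
  have h1 : (2 ^ i) ^ Bi.card ≤ ∏ p ∈ Bi, p := by
    apply Finset.pow_card_le_prod
    intro p hp
    simp only [hBi, Finset.mem_filter, Finset.mem_Ico] at hp
    omega
  have h2 : ∏ p ∈ Bi, p ≤ primorial (2 ^ (i + 1)) := by
    apply Finset.prod_le_prod_of_subset_of_one_le'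
    · intro p hp
      simp only [hBi, Finset.mem_filter, Finset.mem_Ico] at hp
      simp only [Finset.mem_filter, Finset.mem_range]
      exact ⟨by omega, hp.2⟩
    · intro p hp _
      simp only [Finset.mem_filter, Finset.mem_range] at hp
      exact hp.2.one_lt.le
  have h3 : primorial (2 ^ (i + 1)) ≤ 4 ^ 2 ^ (i + 1) := primorial_le_4_pow _
  have h4 : (2:ℕ) ^ (i * Bi.card) ≤ 2 ^ (2 ^ (i + 2)) := by
    calc (2:ℕ) ^ (i * Bi.card) = (2 ^ i) ^ Bi.card := by rw [pow_mul]
      _ ≤ 4 ^ 2 ^ (i + 1) := le_trans h1 (le_trans h2 h3)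
      _ = 2 ^ (2 ^ (i + 2)) := by
          rw [show (4:ℕ) = 2 ^ 2 by norm_num, ← pow_mul, pow_succ (2:ℕ) (i+1)]
          ring_nf
  exact (Nat.pow_le_pow_iff_right (by norm_num)).mp h4

lemma aux_phi (m : ℕ) (hm : 1 ≤ m) :
    ∑ p ∈ (Finset.range (2 ^ m + 1)).filter Nat.Prime, (1 : ℝ) / p ≤
      1 + ∑ i ∈ Finset.Ico 1 m, 4 / (i : ℝ) := by
  induction m, hm using Nat.le_induction with
  | base =>
    have h2 : (Finset.range (2 ^ 1 + 1)).filter Nat.Prime = {2} := by decide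
    rw [h2]
    norm_num
  | succ m hm ih =>
    have hsplit : ∑ p ∈ (Finset.range (2 ^ (m + 1) + 1)).filter Nat.Prime, (1 : ℝ) / p =
        ∑ p ∈ (Finset.range (2 ^ m + 1)).filter Nat.Prime, (1 : ℝ) / p +
        ∑ p ∈ (Finset.Ico (2 ^ m + 1) (2 ^ (m + 1) + 1)).filter Nat.Prime, (1 : ℝ) / p := by
      rw [Finset.sum_filter, Finset.sum_filter, Finset.sum_filter, Finset.range_eq_Ico]
      have hle : 2 ^ m + 1 ≤ 2 ^ (m + 1) + 1 := by
        have := Nat.pow_le_pow_right (by norm_num : 1 ≤ 2) (Nat.le_succ m); omega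
      rw [← Finset.sum_Ico_consecutive (fun p => if p.Prime then (1:ℝ)/p else 0)
        (Nat.zero_le (2 ^ m + 1)) hle]
      rw [Finset.range_eq_Ico]
    have hblock : ∑ p ∈ (Finset.Ico (2 ^ m + 1) (2 ^ (m + 1) + 1)).filter Nat.Prime,
        (1 : ℝ) / p ≤ 4 / (m : ℝ) := by
      set Bi := (Finset.Ico (2 ^ m + 1) (2 ^ (m + 1) + 1)).filter Nat.Prime with hBi
      have hcard := aux_block m
      have h1 : ∑ p ∈ Bi, (1 : ℝ) / p ≤ Bi.card • ((1:ℝ) / 2 ^ m) := by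
        apply Finset.sum_le_card_nsmul
        intro p hp
        simp only [hBi, Finset.mem_filter, Finset.mem_Ico] at hp
        apply div_le_div_of_nonneg_left one_pos.le (by positivity)
        exact_mod_cast Nat.le_of_lt (by omega)
      rw [nsmul_eq_mul] at h1
      refine h1.trans ?_
      rw [mul_one_div, div_le_div_iff₀ (by positivity) (by exact_mod_cast hm), mul_comm]
      have h5 : ((m * Bi.card : ℕ) : ℝ) ≤ ((2 ^ (m + 2) : ℕ) : ℝ) := by exact_mod_cast hcard
      push_cast at h5
      calc (m : ℝ) * Bi.card ≤ 2 ^ (m + 2) := h5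
        _ = 4 * 2 ^ m := by ring
    rw [hsplit, Finset.sum_Ico_succ_top (by omega : 1 ≤ m)]
    linarith

theorem stmt_17 (q C : ℝ) (hq : 1 < q) (hC : 0 < C) (e : ℕ → ℕ)
    (hpos : ∀ ℓ, ℓ.Prime → 1 ≤ e ℓ)
    (hbd : ∀ ℓ, ℓ.Prime → (e ℓ : ℝ) ≤ q ^ ℓ * C)
    (htwo : ∀ p, p.Prime → ∀ ℓ₁ ℓ₂ ℓ₃ : ℕ, ℓ₁.Prime → ℓ₂.Prime → ℓ₃.Prime →
      ℓ₁ ≠ ℓ₂ → ℓ₁ ≠ ℓ₃ → ℓ₂ ≠ ℓ₃ →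
      ¬ (p ∣ e ℓ₁ ∧ p ∣ e ℓ₂ ∧ p ∣ e ℓ₃)) :
    ∀ ε : ℝ, 0 < ε → ∀ B : ℕ, ∃ ℓ, B ≤ ℓ ∧ ℓ.Prime ∧
      ∑ p ∈ (e ℓ).primeFactors, (1 : ℝ) / p < ε := by
  classical
  intro ε hε B
  by_contra hcon
  push_neg at hcon
  -- constants
  have hlog2 : (0:ℝ) < Real.log 2 := Real.log_pos (by norm_num)
  have hlogq : 0 ≤ Real.log q := Real.log_nonneg hq.le
  set Dr : ℝ := (Real.log q + max (Real.log C) 0) / Real.log 2 with hDrdef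
  have hDr0 : 0 ≤ Dr := by
    apply div_nonneg _ hlog2.le
    have : (0:ℝ) ≤ max (Real.log C) 0 := le_max_right _ _
    linarith
  obtain ⟨d, hd⟩ : ∃ d : ℕ, 2 * Dr / ε < 2 ^ d :=
    pow_unbounded_of_one_lt _ (by norm_num : (1:ℝ) < 2)
  set n : ℕ := ⌈(64 / ε) ^ 2⌉₊ + ⌈8 / ε⌉₊ + 2 * B + d + 1 with hndef
  -- Bertrand primes
  have hL : ∀ i : ℕ, ∃ p : ℕ, p.Prime ∧ 2 ^ i < p ∧ p ≤ 2 ^ (i + 1) := by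
    intro i
    obtain ⟨p, hp, h1, h2⟩ := Nat.exists_prime_lt_and_le_two_mul (2 ^ i) (by positivity)
    refine ⟨p, hp, h1, ?_⟩
    rw [pow_succ]; omega
  choose L hLp hLlb hLub using hL
  have hLmono : ∀ a b : ℕ, a < b → L a < L b := by
    intro a b hab
    calc L a ≤ 2 ^ (a + 1) := hLub a
      _ ≤ 2 ^ b := Nat.pow_le_pow_right (by norm_num) hab
      _ < L b := hLlb b
  have hLne : ∀ a b : ℕ, a ≠ b → L a ≠ L b := by
    intro a b hab
    rcases hab.lt_or_gt with h | h
    · exact (hLmono _ _ h).ne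
    · exact (hLmono _ _ h).ne'
  have hLB : ∀ i, B ≤ i → B ≤ L i := by
    intro i hi
    have h1 : B < 2 ^ B := Nat.lt_two_pow_self
    have h2 : (2:ℕ) ^ B ≤ 2 ^ i := Nat.pow_le_pow_right (by norm_num) hi
    have := hLlb i
    omega
  -- the threshold
  set T : ℕ := 2 ^ (n + d) with hTdef
  set F : Finset ℕ := (Finset.range (T + 1)).filter Nat.Prime with hFdef
  -- per-i small-prime lower bound
  have hsmall : ∀ i ∈ Finset.Ico B n, ε / 2 ≤
      ∑ p ∈ (e (L i)).primeFactors.filter (fun p => p ≤ T), (1 : ℝ) / p := by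
    intro i hi
    rw [Finset.mem_Ico] at hi
    have hLpi := hLp i
    have hepos := hpos (L i) hLpi
    have hεi : ε ≤ ∑ p ∈ (e (L i)).primeFactors, (1 : ℝ) / p :=
      hcon (L i) (hLB i hi.1) hLpi
    -- card bound
    have hω : ((e (L i)).primeFactors.card : ℝ) ≤ 2 ^ n * Dr := by
      have h1 : (2:ℝ) ^ (e (L i)).primeFactors.card ≤ (e (L i) : ℝ) := by
        exact_mod_cast aux_pow_card_primeFactors (e (L i)) hepos
      have hLin : L i ≤ 2 ^ n := by
        have := hLub i
        have h2 : (2:ℕ) ^ (i + 1) ≤ 2 ^ n := Nat.pow_le_pow_right (by norm_num) (by omega)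
        omega
      have h2 : (e (L i) : ℝ) ≤ q ^ (2^n : ℕ) * C := by
        refine (hbd (L i) hLpi).trans ?_
        have : q ^ (L i) ≤ q ^ (2^n : ℕ) := pow_le_pow_right₀ hq.le hLin
        nlinarith
      have h3 : (2:ℝ) ^ (e (L i)).primeFactors.card ≤ q ^ (2^n : ℕ) * C := h1.trans h2
      have h4 : ((e (L i)).primeFactors.card : ℝ) * Real.log 2 ≤
          (2^n : ℕ) * Real.log q + Real.log C := by
        have hlt : (0:ℝ) < (2:ℝ) ^ (e (L i)).primeFactors.card := by positivity
        have := Real.log_le_log hlt h3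
        rw [Real.log_pow, Real.log_mul (by positivity) hC.ne', Real.log_pow] at this
        exact_mod_cast this
      have h2n : (1:ℝ) ≤ 2 ^ n := one_le_pow₀ (by norm_num)
      have h5 : ((2^n : ℕ) : ℝ) * Real.log q + Real.log C ≤
          2 ^ n * (Real.log q + max (Real.log C) 0) := by
        push_cast
        have hm1 : Real.log C ≤ max (Real.log C) 0 := le_max_left _ _
        have hm2 : (0:ℝ) ≤ max (Real.log C) 0 := le_max_right _ _
        nlinarith
      rw [hDrdef, ← mul_div_assoc, le_div_iff₀ hlog2]
      exact h4.trans h5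
    -- large part
    have hTpos : (0:ℝ) < (T:ℕ) := by positivity
    have hlarge : ∑ p ∈ (e (L i)).primeFactors.filter (fun p => ¬ p ≤ T), (1:ℝ)/p ≤ ε/2 := by
      have hstep : ∀ p ∈ (e (L i)).primeFactors.filter (fun p => ¬ p ≤ T),
          (1:ℝ)/p ≤ 1/(T:ℕ) := by
        intro p hp
        rw [Finset.mem_filter] at hp
        have hpT : ((T:ℕ):ℝ) ≤ (p:ℝ) := by
          have : T ≤ p := by omega
          exact_mod_cast this
        exact one_div_le_one_div_of_le hTpos hpT
      have hcard : (((e (L i)).primeFactors.filter (fun p => ¬ p ≤ T)).card : ℝ) ≤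
          ((e (L i)).primeFactors.card : ℝ) := by
        exact_mod_cast Finset.card_filter_le _ _
      have hsum := Finset.sum_le_card_nsmul _ _ _ hstep
      rw [nsmul_eq_mul] at hsum
      refine hsum.trans ?_
      have hTcast : ((T:ℕ):ℝ) = 2 ^ (n + d) := by rw [hTdef]; push_cast; ring
      calc (((e (L i)).primeFactors.filter (fun p => ¬ p ≤ T)).card : ℝ) * (1/(T:ℕ))
          ≤ (2 ^ n * Dr) * (1/(T:ℕ)) := by
            apply mul_le_mul_of_nonneg_right (hcard.trans hω) (by positivity)
        _ = Dr / 2 ^ d := by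
            rw [hTcast, pow_add (2:ℝ) n d]
            have h2n : (2:ℝ) ^ n ≠ 0 := by positivity
            rw [one_div, mul_inv, div_eq_mul_inv, ← mul_assoc, mul_comm ((2:ℝ) ^ n) Dr,
              mul_inv_cancel_right₀ h2n]
        _ ≤ ε / 2 := by
            rw [div_le_div_iff₀ (by positivity) (by norm_num)]
            rw [div_lt_iff₀ hε] at hd
            nlinarith [pow_pos (show (0:ℝ) < 2 by norm_num) d]
    have hsplitPF := Finset.sum_filter_add_sum_filter_not (e (L i)).primeFactors
      (fun p => p ≤ T) (fun p => (1:ℝ)/p)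
    linarith
  -- total lower bound
  have htotal1 : ((n - B : ℕ) : ℝ) * (ε/2) ≤
      ∑ i ∈ Finset.Ico B n, ∑ p ∈ (e (L i)).primeFactors.filter (fun p => p ≤ T),
        (1:ℝ)/p := by
    calc ((n - B : ℕ) : ℝ) * (ε/2) = ∑ _i ∈ Finset.Ico B n, (ε/2) := by
          rw [Finset.sum_const, Nat.card_Ico, nsmul_eq_mul]
      _ ≤ _ := Finset.sum_le_sum hsmall
  -- rewrite as divisor sums over F
  have hset : ∀ i ∈ Finset.Ico B n,
      (e (L i)).primeFactors.filter (fun p => p ≤ T) =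
        F.filter (fun p => p ∣ e (L i)) := by
    intro i _
    ext p
    simp only [hFdef, Finset.mem_filter, Finset.mem_range, Nat.mem_primeFactors]
    constructor
    · rintro ⟨⟨hp, hdvd, -⟩, hle⟩; exact ⟨⟨by omega, hp⟩, hdvd⟩
    · rintro ⟨⟨hlt, hp⟩, hdvd⟩
      refine ⟨⟨hp, hdvd, ?_⟩, by omega⟩
      have := hpos (L i) (hLp i); omega
  -- double counting
  have hswap : ∑ i ∈ Finset.Ico B n, ∑ p ∈ F.filter (fun p => p ∣ e (L i)), (1:ℝ)/p
      ≤ 2 * ∑ p ∈ F, (1:ℝ)/p := by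
    have h1 : ∀ i ∈ Finset.Ico B n, ∑ p ∈ F.filter (fun p => p ∣ e (L i)), (1:ℝ)/p =
        ∑ p ∈ F, if p ∣ e (L i) then (1:ℝ)/p else 0 := fun i _ => Finset.sum_filter _ _
    rw [Finset.sum_congr rfl h1, Finset.sum_comm]
    have h2 : ∀ p ∈ F, (∑ i ∈ Finset.Ico B n, if p ∣ e (L i) then (1:ℝ)/p else 0)
        ≤ 2 * (1/(p:ℝ)) := by
      intro p hpF
      have hp : p.Prime := (Finset.mem_filter.mp hpF).2
      rw [← Finset.sum_filter, Finset.sum_const, nsmul_eq_mul]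
      have hcard2 : (((Finset.Ico B n).filter (fun i => p ∣ e (L i))).card : ℝ) ≤ 2 := by
        have : ((Finset.Ico B n).filter (fun i => p ∣ e (L i))).card ≤ 2 := by
          by_contra hgt
          push_neg at hgt
          obtain ⟨a, b, c, ha, hb, hc, hab, hac, hbc⟩ := Finset.two_lt_card_iff.mp hgt
          rw [Finset.mem_filter] at ha hb hc
          exact htwo p hp (L a) (L b) (L c) (hLp a) (hLp b) (hLp c)
            (hLne a b hab) (hLne a c hac) (hLne b c hbc) ⟨ha.2, hb.2, hc.2⟩
        exact_mod_cast this
      apply mul_le_mul_of_nonneg_right hcard2 (by positivity)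
    calc ∑ p ∈ F, (∑ i ∈ Finset.Ico B n, if p ∣ e (L i) then (1:ℝ)/p else 0)
        ≤ ∑ p ∈ F, 2 * (1/(p:ℝ)) := Finset.sum_le_sum h2
      _ = 2 * ∑ p ∈ F, (1:ℝ)/p := by rw [Finset.mul_sum]
  -- the prime sum bound
  have hphi : ∑ p ∈ F, (1:ℝ)/p ≤ 1 + 8 * Real.sqrt ((n:ℝ) + d) := by
    have h1 := aux_phi (n + d) (by omega)
    have h3 : ∑ i ∈ Finset.Ico 1 (n + d), (4:ℝ)/i =
        4 * ∑ i ∈ Finset.Ico 1 (n + d), (1:ℝ)/i := by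
      rw [Finset.mul_sum]
      apply Finset.sum_congr rfl
      intro x _; ring
    have h4 : ∑ i ∈ Finset.Ico 1 (n + d), (1:ℝ)/i ≤
        ∑ i ∈ Finset.Ico 1 (n + d + 1), (1:ℝ)/i := by
      apply Finset.sum_le_sum_of_subset_of_nonneg
        (Finset.Ico_subset_Ico le_rfl (by omega))
      intro i _ _; positivity
    have h5 := aux_harmonic (n + d)
    have hcast : ((n + d : ℕ) : ℝ) = (n:ℝ) + d := by push_cast; ring
    rw [hcast] at h5
    have hFeq : F = (Finset.range (2 ^ (n + d) + 1)).filter Nat.Prime := by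
      rw [hFdef, hTdef]
    rw [hFeq]
    linarith
  -- numeric contradiction
  have main : ((n - B : ℕ):ℝ) * (ε/2) ≤ 2 + 16 * Real.sqrt ((n:ℝ) + d) := by
    calc ((n - B : ℕ):ℝ) * (ε/2) ≤ _ := htotal1
      _ = ∑ i ∈ Finset.Ico B n, ∑ p ∈ F.filter (fun p => p ∣ e (L i)), (1:ℝ)/p :=
          Finset.sum_congr rfl (fun i hi => by rw [hset i hi])
      _ ≤ 2 * ∑ p ∈ F, (1:ℝ)/p := hswap
      _ ≤ 2 * (1 + 8 * Real.sqrt ((n:ℝ) + d)) := by linarith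
      _ = 2 + 16 * Real.sqrt ((n:ℝ) + d) := by ring
  set S := Real.sqrt ((n:ℝ) + d) with hS
  have hSS : S * S = (n:ℝ) + d := Real.mul_self_sqrt (by positivity)
  have hS64 : 64 / ε ≤ S := by
    rw [hS]
    apply (Real.le_sqrt (by positivity) (by positivity)).mpr
    have hc1 : (64 / ε) ^ 2 ≤ (⌈(64/ε)^2⌉₊ : ℝ) := Nat.le_ceil _
    have hc2 : (⌈(64/ε)^2⌉₊ : ℝ) ≤ (n:ℝ) := by exact_mod_cast (by omega : ⌈(64/ε)^2⌉₊ ≤ n)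
    have : (0:ℝ) ≤ d := Nat.cast_nonneg d
    linarith
  have h64S : 64 ≤ ε * S := by
    rw [div_le_iff₀ hε] at hS64
    linarith
  have hcastnB : ((n - B : ℕ):ℝ) = (n:ℝ) - B := by
    rw [Nat.cast_sub (by omega)]
  have h8 : 8 ≤ ε * ((n:ℝ) - 2*B - d - 1) := by
    have hc8 : 8/ε ≤ (⌈8/ε⌉₊:ℝ) := Nat.le_ceil _
    have hnval : (n:ℝ) = (⌈(64/ε)^2⌉₊:ℝ) + (⌈8/ε⌉₊:ℝ) + 2*B + d + 1 := by
      rw [hndef]; push_cast; ring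
    have hge0 : (0:ℝ) ≤ (⌈(64/ε)^2⌉₊:ℝ) := Nat.cast_nonneg _
    have h9 : 8/ε ≤ (n:ℝ) - 2*B - d - 1 := by linarith
    rw [div_le_iff₀ hε] at h9
    linarith
  rw [hcastnB] at main
  nlinarith [mul_le_mul_of_nonneg_left h64S (Real.sqrt_nonneg ((n:ℝ) + d)), hSS, main, h8,
    Real.sqrt_nonneg ((n:ℝ) + d), hε]
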